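/- For 0 < α < 1 and integer n ≥ 1, the quantity ψ_n(α)/n is strictly decreasing in n; that is, ψ_{n+1}(α)/(n+1) < ψ_n(α)/n. -/
import Mathlib


noncomputable def psi (α : ℝ) (n : ℕ) : ℝ :=
  ((n : ℝ) + 1 + Real.sqrt ((n : ℝ)^2 + 2 * n * Real.cos (Real.pi * α) + 1)) /
    (2 * Real.sin (Real.pi * α / 2))

set_option maxHeartbeats 1000000 in
theorem stmt1 (α : ℝ) (hα0 : 0 < α) (hα1 : α < 1) (n : ℕ) (hn : 1 ≤ n) :
    psi α (n + 1) / (n + 1) < psi α n / n := by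
  have hπ := Real.pi_pos
  have hmem : Real.pi * α ∈ Set.Icc 0 Real.pi :=
    Set.mem_Icc.mpr ⟨by positivity, by nlinarith⟩
  have hc1 : Real.cos (Real.pi * α) < 1 := by
    have h := Real.strictAntiOn_cos (Set.mem_Icc.mpr ⟨le_refl 0, hπ.le⟩) hmem
      (by positivity)
    simpa using h
  have hc : -1 < Real.cos (Real.pi * α) := by
    have h := Real.strictAntiOn_cos hmem (Set.mem_Icc.mpr ⟨hπ.le, le_refl _⟩)
      (by nlinarith)
    simpa [Real.cos_pi] using h
  set c := Real.cos (Real.pi * α) with hcdef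
  set s := Real.sin (Real.pi * α / 2) with hsdef
  have hs : 0 < s := Real.sin_pos_of_pos_of_lt_pi (by positivity) (by nlinarith)
  have hN : (1:ℝ) ≤ (n:ℝ) := by exact_mod_cast hn
  set N := (n:ℝ) with hNdef
  set A := N^2 + 2*N*c + 1 with hAdef
  set A' := (N+1)^2 + 2*(N+1)*c + 1 with hA'def
  have hA : 0 < A := by nlinarith [sq_nonneg (N + c)]
  have hA' : 0 ≤ A' := by nlinarith [sq_nonneg (N + 1 + c)]
  have hAA' : A' = A + 2*N + 1 + 2*c := by rw [hAdef, hA'def]; ring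
  have hsA : Real.sqrt A ^ 2 = A := Real.sq_sqrt hA.le
  have hsA' : Real.sqrt A' ^ 2 = A' := Real.sq_sqrt hA'
  have hsqA : 0 ≤ Real.sqrt A := Real.sqrt_nonneg _
  have hsqA' : 0 ≤ Real.sqrt A' := Real.sqrt_nonneg _
  have key0 : -(1 + N*c) < Real.sqrt A := by
    rcases le_or_gt (-(1 + N*c)) 0 with h | h
    · exact h.trans_lt (Real.sqrt_pos.mpr hA)
    · rw [Real.lt_sqrt h.le]
      nlinarith [mul_pos (show (0:ℝ) < N^2 by positivity)
        (show (0:ℝ) < 1 - c^2 by nlinarith)]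
  have key : N * Real.sqrt A' < 1 + (N+1) * Real.sqrt A := by
    have hmul : -(2*(N+1)) * (1 + N*c) < 2*(N+1) * Real.sqrt A := by
      nlinarith [mul_lt_mul_of_pos_left key0 (show (0:ℝ) < 2*(N+1) by linarith)]
    have h2 : (N * Real.sqrt A')^2 < (1 + (N+1)*Real.sqrt A)^2 := by
      nlinarith [hsA, hsA', hmul, hAA']
    exact lt_of_pow_lt_pow_left₀ 2 (by positivity) h2
  have hden1 : (0:ℝ) < 2 * s * (N + 1) := by positivity
  have hden2 : (0:ℝ) < 2 * s * N := by positivity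
  unfold psi
  push_cast
  rw [div_div, div_div, div_lt_div_iff₀ hden1 hden2]
  nlinarith [mul_lt_mul_of_pos_left key (show (0:ℝ) < 2*s by linarith)]
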